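/- Let G be a finite simple graph on n ≥ 1 vertices. Then for every real λ with 0 < λ < 1/(2n−1), one has V_G(λ) ≥ λ/(1+nλ)², where λ/(1+nλ)² is the variance fraction of the complete graph K_n. -/

import Mathlib

open scoped Classical

/-- The finset of independent sets of a finite simple graph (the empty set counts). -/
noncomputable def indepSets {V : Type*} [Fintype V] (G : SimpleGraph V) : Finset (Finset V) :=
  Finset.univ.filter fun I => ∀ u ∈ I, ∀ v ∈ I, ¬ G.Adj u v

/-- The hard-core partition function `Z_G(λ) = Σ_{I independent} λ^|I|`. -/
noncomputable def hcZ {V : Type*} [Fintype V] (G : SimpleGraph V) (l : ℝ) : ℝ :=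
  ∑ I ∈ indepSets G, l ^ I.card

/-- The occupancy fraction `E_G(λ) = λ Z_G'(λ)/(n Z_G(λ))`, i.e. `(1/n)` times the
expected size of an independent set from the hard-core model; note
`λ Z_G'(λ) = Σ_I |I| λ^|I|`. -/
noncomputable def hcE {V : Type*} [Fintype V] (G : SimpleGraph V) (l : ℝ) : ℝ :=
  (∑ I ∈ indepSets G, (I.card : ℝ) * l ^ I.card) / ((Fintype.card V : ℝ) * hcZ G l)

/-- The variance fraction `V_G(λ) = λ (d/dλ) E_G(λ)`, i.e. `(1/n)` times the variance
of the size of an independent set from the hard-core model: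
`V_G(λ) = (1/n)(𝔼|I|² - (𝔼|I|)²)`. -/
noncomputable def hcV {V : Type*} [Fintype V] (G : SimpleGraph V) (l : ℝ) : ℝ :=
  ((∑ I ∈ indepSets G, (I.card : ℝ) ^ 2 * l ^ I.card) / hcZ G l
      - ((∑ I ∈ indepSets G, (I.card : ℝ) * l ^ I.card) / hcZ G l) ^ 2) /
    (Fintype.card V : ℝ)

private lemma sumA {α : Type*} [DecidableEq α] (s : Finset α) (l : ℝ) :
    ∑ I ∈ s.powerset, l ^ I.card = (1 + l) ^ s.card := by
  induction s using Finset.induction_on with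
  | empty => simp
  | @insert a s ha ih =>
    rw [Finset.sum_powerset_insert ha, Finset.card_insert_of_notMem ha]
    have h1 : ∑ I ∈ s.powerset, l ^ (insert a I).card
        = ∑ I ∈ s.powerset, l * l ^ I.card := by
      refine Finset.sum_congr rfl fun I hI => ?_
      have haI : a ∉ I := fun h => ha (Finset.mem_powerset.mp hI h)
      rw [Finset.card_insert_of_notMem haI, pow_succ]
      ring
    rw [h1, ← Finset.mul_sum, ih, pow_succ]
    ring

private lemma sumB {α : Type*} [DecidableEq α] (s : Finset α) (l : ℝ) :
    (1 + l) * ∑ I ∈ s.powerset, (I.card : ℝ) * l ^ I.card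
      = (s.card : ℝ) * l * (1 + l) ^ s.card := by
  induction s using Finset.induction_on with
  | empty => simp
  | @insert a s ha ih =>
    rw [Finset.sum_powerset_insert ha, Finset.card_insert_of_notMem ha]
    have h1 : ∑ I ∈ s.powerset, ((insert a I).card : ℝ) * l ^ (insert a I).card
        = ∑ I ∈ s.powerset, ((I.card : ℝ) + 1) * (l * l ^ I.card) := by
      refine Finset.sum_congr rfl fun I hI => ?_
      have haI : a ∉ I := fun h => ha (Finset.mem_powerset.mp hI h)
      rw [Finset.card_insert_of_notMem haI, pow_succ]
      push_cast
      ring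
    rw [h1]
    have hA := sumA s l
    have expand : ∑ I ∈ s.powerset, ((I.card : ℝ) + 1) * (l * l ^ I.card)
        = l * (∑ I ∈ s.powerset, (I.card : ℝ) * l ^ I.card) + l * (1 + l) ^ s.card := by
      rw [← hA, Finset.mul_sum, Finset.mul_sum, ← Finset.sum_add_distrib]
      exact Finset.sum_congr rfl fun I _ => by ring
    rw [expand]
    push_cast
    linear_combination (1 + l) * ih

set_option maxHeartbeats 1000000 in
private lemma stmt2_aux {V : Type*} [Fintype V] (G : SimpleGraph V)
    (hn : 1 ≤ Fintype.card V) (l : ℝ) (hl : 0 < l)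
    (hl' : l < 1 / (2 * (Fintype.card V : ℝ) - 1)) :
    l / (1 + (Fintype.card V : ℝ) * l) ^ 2 ≤
      ((∑ I ∈ indepSets G, (I.card : ℝ) ^ 2 * l ^ I.card) / hcZ G l
          - ((∑ I ∈ indepSets G, (I.card : ℝ) * l ^ I.card) / hcZ G l) ^ 2) /
        (Fintype.card V : ℝ) := by
  classical
  set n : ℝ := (Fintype.card V : ℝ) with hn_def
  have hn1 : (1 : ℝ) ≤ n := by rw [hn_def]; exact_mod_cast hn
  have hn0 : (0 : ℝ) < n := lt_of_lt_of_le one_pos hn1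
  have hP : (0 : ℝ) < 1 + n * l := by nlinarith
  set T := indepSets G with hT_def
  set Z := hcZ G l with hZdef
  set S1 := ∑ I ∈ T, (I.card : ℝ) * l ^ I.card with hS1def
  set S2 := ∑ I ∈ T, (I.card : ℝ) ^ 2 * l ^ I.card with hS2def
  have hempty : (∅ : Finset V) ∈ T := by
    show (∅ : Finset V) ∈ indepSets G
    simp [indepSets]
  have hsingle : ∀ v : V, ({v} : Finset V) ∈ T := by
    intro v
    show ({v} : Finset V) ∈ indepSets G
    simp [indepSets]
  have hZ1 : (1 : ℝ) ≤ Z := by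
    have h0 : (1 : ℝ) = l ^ (∅ : Finset V).card := by simp
    rw [hZdef, hcZ, ← hT_def, h0]
    exact Finset.single_le_sum (f := fun I : Finset V => l ^ I.card)
      (fun I _ => by positivity) hempty
  have hZ0 : (0 : ℝ) < Z := lt_of_lt_of_le one_pos hZ1
  have hS1nn : 0 ≤ S1 := Finset.sum_nonneg fun I _ => by positivity
  have hS12 : S1 ≤ S2 := by
    refine Finset.sum_le_sum fun I _ => ?_
    have h1 : (I.card : ℝ) ≤ (I.card : ℝ) ^ 2 := by
      rcases Nat.eq_zero_or_pos I.card with h | h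
      · simp [h]
      · have : (1 : ℝ) ≤ (I.card : ℝ) := by exact_mod_cast h
        nlinarith
    exact mul_le_mul_of_nonneg_right h1 (pow_nonneg hl.le _)
  -- lower bound: n*l*Z ≤ (1+n*l)*S1
  have h4 : n * l * Z ≤ (1 + n * l) * S1 := by
    have hsum : (1 + n * l) * S1 - n * l * Z
        = ∑ I ∈ T, ((1 + n * l) * I.card - n * l) * l ^ I.card := by
      rw [hZdef, hcZ, hS1def, ← hT_def, Finset.mul_sum, Finset.mul_sum,
        ← Finset.sum_sub_distrib]
      exact Finset.sum_congr rfl fun I _ => by ring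
    have hinj : Function.Injective (fun v : V => ({v} : Finset V)) :=
      Finset.singleton_injective
    set S' : Finset (Finset V) :=
      insert ∅ (Finset.univ.image fun v : V => ({v} : Finset V)) with hS'def
    have hS'sub : S' ⊆ T := by
      intro I hI
      rcases Finset.mem_insert.mp hI with h | h
      · rw [h]; exact hempty
      · obtain ⟨v, -, rfl⟩ := Finset.mem_image.mp h
        exact hsingle v
    have hnotmem : (∅ : Finset V) ∉ Finset.univ.image (fun v : V => ({v} : Finset V)) := by
      simp
    have hsum' : ∑ I ∈ S', ((1 + n * l) * I.card - n * l) * l ^ I.card = 0 := by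
      rw [hS'def, Finset.sum_insert hnotmem,
        Finset.sum_image (fun a _ b _ h => hinj h)]
      simp only [Finset.card_empty, Finset.card_singleton, Nat.cast_zero, Nat.cast_one,
        pow_zero, pow_one, Finset.sum_const, Finset.card_univ, nsmul_eq_mul]
      rw [← hn_def]
      ring
    have hge : 0 ≤ ∑ I ∈ T, ((1 + n * l) * I.card - n * l) * l ^ I.card := by
      rw [← hsum']
      refine Finset.sum_le_sum_of_subset_of_nonneg hS'sub ?_
      intro I _ hIS'
      have hne : I ≠ ∅ := fun h => hIS' (by simp [hS'def, h])
      have hcard : 1 ≤ I.card := Finset.card_pos.mpr (Finset.nonempty_iff_ne_empty.mpr hne)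
      have h1 : (1 : ℝ) ≤ (I.card : ℝ) := by exact_mod_cast hcard
      have h2 : 0 ≤ (1 + n * l) * I.card - n * l := by nlinarith
      exact mul_nonneg h2 (pow_nonneg hl.le _)
    linarith [hsum ▸ hge]
  -- key inequality on lambda
  have h2n : (0 : ℝ) < 2 * n - 1 := by linarith
  have hb : l * (2 * n - 1) < 1 := (lt_div_iff₀ h2n).mp hl'
  have hnl : n * l ≤ 1 := by nlinarith
  have hkey : n * l + n ^ 2 * l ^ 2 ≤ 1 + l := by nlinarith
  -- upper bound: (1+n*l)*S1 ≤ Z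
  have h5 : (1 + n * l) * S1 ≤ Z := by
    have hsum : (1 + n * l) * S1 - Z
        = ∑ I ∈ T, ((1 + n * l) * I.card - 1) * l ^ I.card := by
      rw [hZdef, hcZ, hS1def, ← hT_def, Finset.mul_sum, ← Finset.sum_sub_distrib]
      exact Finset.sum_congr rfl fun I _ => by ring
    have hTsub : T ⊆ (Finset.univ : Finset V).powerset := by
      intro I _
      simp
    have hle : ∑ I ∈ T, ((1 + n * l) * I.card - 1) * l ^ I.card
        ≤ ∑ I ∈ (Finset.univ : Finset V).powerset, ((1 + n * l) * I.card - 1) * l ^ I.card := by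
      refine Finset.sum_le_sum_of_subset_of_nonneg hTsub ?_
      intro I _ hIT
      have hne : I ≠ ∅ := by
        rintro rfl
        exact hIT hempty
      have hcard : 1 ≤ I.card := Finset.card_pos.mpr (Finset.nonempty_iff_ne_empty.mpr hne)
      have h1 : (1 : ℝ) ≤ (I.card : ℝ) := by exact_mod_cast hcard
      have h2 : 0 ≤ (1 + n * l) * I.card - 1 := by nlinarith
      exact mul_nonneg h2 (pow_nonneg hl.le _)
    have expand : ∑ I ∈ (Finset.univ : Finset V).powerset, ((1 + n * l) * I.card - 1) * l ^ I.card
        = (1 + n * l) * (∑ I ∈ (Finset.univ : Finset V).powerset, (I.card : ℝ) * l ^ I.card)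
          - (1 + l) ^ (Finset.univ : Finset V).card := by
      rw [← sumA (Finset.univ : Finset V) l, Finset.mul_sum, ← Finset.sum_sub_distrib]
      exact Finset.sum_congr rfl fun I _ => by ring
    have hB := sumB (Finset.univ : Finset V) l
    have hl1 : (0 : ℝ) < 1 + l := by linarith
    have hpow : (0 : ℝ) ≤ (1 + l) ^ (Finset.univ : Finset V).card := by positivity
    have hcard_univ : ((Finset.univ : Finset V).card : ℝ) = n := by
      rw [Finset.card_univ, ← hn_def]
    have hfin : (1 + l) * (∑ I ∈ (Finset.univ : Finset V).powerset,
        ((1 + n * l) * I.card - 1) * l ^ I.card) ≤ 0 := by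
      rw [expand, mul_sub]
      have e1 : (1 + l) * ((1 + n * l) * ∑ I ∈ (Finset.univ : Finset V).powerset,
          (I.card : ℝ) * l ^ I.card)
          = (1 + n * l) * (n * l * (1 + l) ^ (Finset.univ : Finset V).card) := by
        rw [mul_left_comm, hB, hcard_univ]
      rw [e1]
      nlinarith [mul_nonneg hpow (sub_nonneg.mpr hkey)]
    have hX : ∑ I ∈ (Finset.univ : Finset V).powerset,
        ((1 + n * l) * I.card - 1) * l ^ I.card ≤ 0 := by
      by_contra hc
      push_neg at hc
      linarith [mul_pos hl1 hc]
    linarith [hsum ▸ (hle.trans hX)]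
  -- final assembly
  have hmu1 : n * l / (1 + n * l) ≤ S1 / Z := by
    rw [div_le_div_iff₀ hP hZ0]
    linear_combination h4
  have hmu2 : S1 / Z ≤ 1 / (1 + n * l) := by
    rw [div_le_div_iff₀ hZ0 hP]
    linear_combination h5
  have hmu3 : S1 / Z ≤ S2 / Z := by gcongr
  have htu : n * l / (1 + n * l) + 1 / (1 + n * l) = 1 := by
    field_simp
    ring
  have h6 : S1 / Z * (n * l / (1 + n * l)) + S1 / Z * (1 / (1 + n * l)) = S1 / Z := by
    rw [← mul_add, htu, mul_one]
  have key : (n * l / (1 + n * l)) * (1 / (1 + n * l)) ≤ S2 / Z - (S1 / Z) ^ 2 := by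
    nlinarith [mul_nonneg (sub_nonneg.mpr hmu1) (sub_nonneg.mpr hmu2), hmu3, h6]
  rw [le_div_iff₀ hn0]
  have heq : l / (1 + n * l) ^ 2 * n = (n * l / (1 + n * l)) * (1 / (1 + n * l)) := by
    field_simp
  rw [heq]
  exact key

theorem stmt2 {V : Type*} [Fintype V] (G : SimpleGraph V)
    (hn : 1 ≤ Fintype.card V) (l : ℝ) (hl : 0 < l)
    (hl' : l < 1 / (2 * (Fintype.card V : ℝ) - 1)) :
    l / (1 + (Fintype.card V : ℝ) * l) ^ 2 ≤ hcV G l :=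
  stmt2_aux G hn l hl hl'
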